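/- If U ∈ U(N) and V ∈ U(M) are balanced unitary matrices, then their tensor (Kronecker) product U ⊗ V ∈ U(NM) is balanced. -/

import Mathlib

open scoped Matrix Kronecker

/-- the sign `sgn(z) = z/|z|` of a complex number (with `sgn 0 = 0`). -/
noncomputable def csgn (z : ℂ) : ℂ := z / ‖z‖

/-- the color component `U_r` of a matrix `U`. -/
noncomputable def colorComp {n : Type*} (U : Matrix n n ℂ) (r : ℝ) :
    Matrix n n ℂ :=
  Matrix.of fun i j => if ‖U i j‖ = r then csgn (U i j) else 0

/-- a matrix is balanced when `U_r·U_s*` and `U_r*·U_s` are self-adjoint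
for all `r, s > 0`. -/
def IsBalanced {n : Type*} [Fintype n] (U : Matrix n n ℂ) : Prop :=
  ∀ r s : ℝ, 0 < r → 0 < s →
    (colorComp U r * (colorComp U s)ᴴ).IsHermitian ∧
    ((colorComp U r)ᴴ * colorComp U s).IsHermitian

lemma csgn_mul (x y : ℂ) : csgn (x * y) = csgn x * csgn y := by
  unfold csgn
  rw [norm_mul, Complex.ofReal_mul, div_mul_div_comm]

lemma kron_conjTranspose {n m : Type*} (A : Matrix n n ℂ) (B : Matrix m m ℂ) :
    (A ⊗ₖ B)ᴴ = Aᴴ ⊗ₖ Bᴴ := by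
  ext ⟨i, k⟩ ⟨j, l⟩
  simp [Matrix.conjTranspose_apply, Matrix.kroneckerMap_apply, star_mul']

/-- The Kronecker product of balanced unitary matrices is balanced. -/
theorem stmt4 (N M : ℕ) (U : Matrix (Fin N) (Fin N) ℂ) (V : Matrix (Fin M) (Fin M) ℂ)
    (hU : U ∈ Matrix.unitaryGroup (Fin N) ℂ) (hV : V ∈ Matrix.unitaryGroup (Fin M) ℂ)
    (hUb : IsBalanced U) (hVb : IsBalanced V) :
    IsBalanced (U ⊗ₖ V) := by
  classical
  set R : Finset ℝ :=
    (Finset.image (fun ij : Fin N × Fin N => ‖U ij.1 ij.2‖) Finset.univ).filter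
      (fun r => 0 < r) with hR
  have hRpos : ∀ r ∈ R, 0 < r := fun r hr => (Finset.mem_filter.mp hr).2
  have key : ∀ p : ℝ, 0 < p →
      colorComp (U ⊗ₖ V) p = ∑ r ∈ R, colorComp U r ⊗ₖ colorComp V (p / r) := by
    intro p hp
    ext ⟨i, k⟩ ⟨a, b⟩
    simp only [colorComp, Matrix.of_apply, Matrix.sum_apply, Matrix.kroneckerMap_apply]
    by_cases h : ‖U i a * V k b‖ = p
    · have hx : ‖U i a‖ ≠ 0 := by
        intro h0; rw [norm_mul, h0, zero_mul] at h; exact hp.ne h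
      have hxpos : 0 < ‖U i a‖ :=
        lt_of_le_of_ne (norm_nonneg _) (Ne.symm hx)
      have hmem : ‖U i a‖ ∈ R := by
        rw [hR]
        simp only [Finset.mem_filter, Finset.mem_image]
        exact ⟨⟨(i, a), Finset.mem_univ _, rfl⟩, hxpos⟩
      erw [if_pos h, csgn_mul]
      rw [Finset.sum_eq_single (‖U i a‖)]
      · rw [if_pos rfl, if_pos]
        rw [eq_div_iff hx, mul_comm, ← norm_mul]
        exact h
      · intro r _ hne
        rw [if_neg (Ne.symm hne), zero_mul]
      · intro hne; exact absurd hmem hne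
    · erw [if_neg h]
      refine (Finset.sum_eq_zero ?_).symm
      intro r hr
      by_cases h1 : ‖U i a‖ = r
      · rw [if_pos h1, if_neg, mul_zero]
        intro h2
        apply h
        rw [norm_mul, h1, h2, mul_div_cancel₀ p (hRpos r hr).ne']
      · rw [if_neg h1, zero_mul]
  intro p q hp hq
  have hterm1 : ∀ r ∈ R, ∀ r' ∈ R,
      (((colorComp U r ⊗ₖ colorComp V (p / r)) *
        (colorComp U r' ⊗ₖ colorComp V (q / r'))ᴴ)ᴴ =
       (colorComp U r ⊗ₖ colorComp V (p / r)) *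
        (colorComp U r' ⊗ₖ colorComp V (q / r'))ᴴ) := by
    intro r hr r' hr'
    rw [kron_conjTranspose, ← Matrix.mul_kronecker_mul, kron_conjTranspose,
      (hUb r r' (hRpos r hr) (hRpos r' hr')).1,
      (hVb (p / r) (q / r') (div_pos hp (hRpos r hr)) (div_pos hq (hRpos r' hr'))).1]
  have hterm2 : ∀ r ∈ R, ∀ r' ∈ R,
      (((colorComp U r ⊗ₖ colorComp V (p / r))ᴴ *
        (colorComp U r' ⊗ₖ colorComp V (q / r')))ᴴ =
       (colorComp U r ⊗ₖ colorComp V (p / r))ᴴ *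
        (colorComp U r' ⊗ₖ colorComp V (q / r'))) := by
    intro r hr r' hr'
    rw [kron_conjTranspose, ← Matrix.mul_kronecker_mul, kron_conjTranspose,
      (hUb r r' (hRpos r hr) (hRpos r' hr')).2,
      (hVb (p / r) (q / r') (div_pos hp (hRpos r hr)) (div_pos hq (hRpos r' hr'))).2]
  constructor
  · rw [key p hp, key q hq]
    unfold Matrix.IsHermitian
    rw [Matrix.conjTranspose_sum, Finset.sum_mul]
    simp only [Finset.mul_sum]
    rw [Matrix.conjTranspose_sum]
    refine Finset.sum_congr rfl fun r hr => ?_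
    rw [Matrix.conjTranspose_sum]
    exact Finset.sum_congr rfl fun r' hr' => hterm1 r hr r' hr'
  · rw [key p hp, key q hq]
    unfold Matrix.IsHermitian
    rw [Matrix.conjTranspose_sum, Finset.sum_mul]
    simp only [Finset.mul_sum]
    rw [Matrix.conjTranspose_sum]
    refine Finset.sum_congr rfl fun r hr => ?_
    rw [Matrix.conjTranspose_sum]
    exact Finset.sum_congr rfl fun r' hr' => hterm2 r hr r' hr'
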